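/- For fixed x > |y| ≥ 0 and ε > 0, define φ_ε(x,y) = (ε²/2)(sinh τ + τ) where τ = arcosh((x² − y²)/(2ε²) + 1), and φ₀(x,y) = (x² − y²)/4. Then φ_ε(x,y) > φ₀(x,y). -/

import Mathlib

open Real

/-- Inverse hyperbolic cosine on `[1, ∞)`. -/
noncomputable def arcosh (x : ℝ) : ℝ := Real.log (x + Real.sqrt (x ^ 2 - 1))

lemma sinh_arcosh (a : ℝ) (ha : 1 ≤ a) : Real.sinh (_root_.arcosh a) = Real.sqrt (a ^ 2 - 1) := by
  have h1 : (0:ℝ) ≤ a ^ 2 - 1 := by nlinarith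
  have hs : 0 ≤ Real.sqrt (a ^ 2 - 1) := Real.sqrt_nonneg _
  have hz : 0 < a + Real.sqrt (a ^ 2 - 1) := by linarith
  have hsq : Real.sqrt (a ^ 2 - 1) ^ 2 = a ^ 2 - 1 := Real.sq_sqrt h1
  have hinv : (a + Real.sqrt (a ^ 2 - 1))⁻¹ = a - Real.sqrt (a ^ 2 - 1) := by
    have hmul : (a + Real.sqrt (a ^ 2 - 1)) * (a - Real.sqrt (a ^ 2 - 1)) = 1 := by nlinarith
    exact (eq_inv_of_mul_eq_one_right hmul).symm
  rw [_root_.arcosh, Real.sinh_log hz, hinv]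
  ring

lemma arcosh_pos (a : ℝ) (ha : 1 < a) : 0 < _root_.arcosh a := by
  have h1 : (0:ℝ) ≤ a ^ 2 - 1 := by nlinarith
  have hs : 0 ≤ Real.sqrt (a ^ 2 - 1) := Real.sqrt_nonneg _
  exact Real.log_pos (by linarith)

theorem stmt_5 (x y ε : ℝ) (hxy : |y| < x) (hε : 0 < ε) :
    (x ^ 2 - y ^ 2) / 4 <
      ε ^ 2 / 2 * (sinh (_root_.arcosh ((x ^ 2 - y ^ 2) / (2 * ε ^ 2) + 1))
        + _root_.arcosh ((x ^ 2 - y ^ 2) / (2 * ε ^ 2) + 1)) := by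
  have hy := abs_nonneg y
  have hy2 : y ^ 2 < x ^ 2 := by
    have := sq_abs y
    nlinarith [abs_nonneg y]
  have hε2 : 0 < ε ^ 2 := by positivity
  set s : ℝ := (x ^ 2 - y ^ 2) / (2 * ε ^ 2) with hs_def
  have hs : 0 < s := div_pos (by linarith) (by positivity)
  have ha : (1:ℝ) < s + 1 := by linarith
  have h1 : sinh (_root_.arcosh (s + 1)) = Real.sqrt ((s + 1) ^ 2 - 1) := sinh_arcosh _ ha.le
  have h2 : s < Real.sqrt ((s + 1) ^ 2 - 1) := by
    rw [show (s+1)^2 - 1 = s^2 + 2*s by ring]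
    rw [Real.lt_sqrt hs.le]
    nlinarith
  have h3 := arcosh_pos (s + 1) ha
  have key : s < sinh (_root_.arcosh (s + 1)) + _root_.arcosh (s + 1) := by
    rw [h1]; linarith
  have heq : (x ^ 2 - y ^ 2) / 4 = ε ^ 2 / 2 * s := by
    field_simp [hs_def]
    have hc := div_mul_cancel₀ (x ^ 2 - y ^ 2) (show (2 * ε ^ 2) ≠ 0 by positivity)
    rw [← hs_def] at hc
    linear_combination (-2) * hc
  rw [heq]
  exact mul_lt_mul_of_pos_left key (by positivity)
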